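/- In the simplified DP with boundary v_{T+1}(k,l) = h(k), h convex and nondecreasing with h(0)=0, rates μ_j ≤ μ_1, and cellular cost q ≥ 0, the last-stage value differences satisfy: for all k and l, v_{T+1}([k−μ_j]⁺, l) − v_{T+1}([k−μ_1]⁺, l) ≥ v_T([k−μ_j]⁺, l) − v_T([k−μ_1]⁺, l), where v_T(k,l) = min{ Σ_{l'} P(l'|l)·h([k−μ_j]⁺), q + Σ_{l'} P(l'|l)·h([k−μ_1]⁺) } = min{ h([k−μ_j]⁺), q + h([k−μ_1]⁺) }. -/

import Mathlib

/-- Supermodularity-type inequality for convex functions. -/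
lemma supermod_aux (h : ℝ → ℝ) (hconv : ConvexOn ℝ Set.univ h)
    {p q r s : ℝ} (hpq : p ≤ q) (hpr : p ≤ r) (hsum : q + r = p + s) :
    h q + h r ≤ h p + h s := by
  rcases eq_or_lt_of_le hpq with rfl | hpq
  · have : r = s := by linarith
    subst this; linarith
  · have hd : 0 < s - p := by linarith
    set θ := (s - q) / (s - p) with hθdef
    have hθ0 : 0 ≤ θ := div_nonneg (by linarith) hd.le
    have hθ1 : 0 ≤ 1 - θ := by
      have : θ ≤ 1 := by rw [hθdef, div_le_one hd]; linarith
      linarith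
    have hq : θ * p + (1 - θ) * s = q := by
      rw [hθdef]; field_simp [hd.ne']; ring
    have hr : (1 - θ) * p + θ * s = r := by
      have : (1 - θ) * p + θ * s = p + s - q := by rw [hθdef]; field_simp [hd.ne']; ring
      linarith
    have h1 := hconv.2 (Set.mem_univ p) (Set.mem_univ s) hθ0 hθ1 (by ring)
    have h2 := hconv.2 (Set.mem_univ p) (Set.mem_univ s) hθ1 hθ0 (by ring)
    simp only [smul_eq_mul] at h1 h2
    rw [hq] at h1
    rw [hr] at h2
    linarith

/-- Key increment lemma: for `μ ≥ 0` and `0 ≤ y ≤ x`,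
`h([x-μ]⁺) - h([y-μ]⁺) ≤ h x - h y`. -/
lemma incr_aux (h : ℝ → ℝ) (hconv : ConvexOn ℝ Set.univ h) (hmono : Monotone h)
    (hh0 : h 0 = 0) {μ x y : ℝ} (hμ : 0 ≤ μ) (hy : 0 ≤ y) (hyx : y ≤ x) :
    h (max 0 (x - μ)) - h (max 0 (y - μ)) ≤ h x - h y := by
  rcases le_total x μ with hxμ | hμx
  · rw [max_eq_left (by linarith), max_eq_left (by linarith)]
    have := hmono hyx
    linarith
  rcases le_total y μ with hyμ | hμy
  · rw [max_eq_right (by linarith), max_eq_left (by linarith)]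
    have h1 : h (x - μ) + h y ≤ h 0 + h (x - μ + y) :=
      supermod_aux h hconv (by linarith) (by linarith) (by ring)
    have h2 : h (x - μ + y) ≤ h x := hmono (by linarith)
    linarith
  · rw [max_eq_right (by linarith), max_eq_right (by linarith)]
    have h1 : h (x - μ) + h y ≤ h (y - μ) + h x :=
      supermod_aux h hconv (by linarith) (by linarith) (by ring)
    linarith

/-- Last-stage value-difference inequality. With boundary
`v_{T+1}(k) = h k` (`h` convex, nondecreasing, `h 0 = 0`), rates `0 ≤ μⱼ ≤ μ₁`,
cost `q ≥ 0`, and `v_T k = min (h [k−μⱼ]⁺) (q + h [k−μ₁]⁺)` (the transition sums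
collapse since `Σ_{l'} P(l'|l) = 1`), we have for all `k`:
`h([k−μⱼ]⁺) − h([k−μ₁]⁺) ≥ v_T([k−μⱼ]⁺) − v_T([k−μ₁]⁺)`. -/
theorem stmt_10
    (μj μ1 q : ℝ) (hμj : 0 ≤ μj) (hμ : μj ≤ μ1) (hq : 0 ≤ q)
    (h : ℝ → ℝ) (hconv : ConvexOn ℝ Set.univ h) (hmono : Monotone h) (hh0 : h 0 = 0)
    (vT : ℝ → ℝ)
    (hvT : ∀ k, vT k = min (h (max 0 (k - μj))) (q + h (max 0 (k - μ1))))
    : ∀ k : ℝ,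
        h (max 0 (k - μj)) - h (max 0 (k - μ1)) ≥
          vT (max 0 (k - μj)) - vT (max 0 (k - μ1)) := by
  intro k
  set A := max 0 (k - μj) with hA
  set B := max 0 (k - μ1) with hB
  have hB0 : 0 ≤ B := le_max_left _ _
  have hBA : B ≤ A := max_le_max le_rfl (by linarith)
  rw [hvT A, hvT B]
  have hμ1 : 0 ≤ μ1 := le_trans hμj hμ
  rcases le_total (h (max 0 (B - μj))) (q + h (max 0 (B - μ1))) with hc | hc
  · rw [min_eq_left hc]
    have h1 : min (h (max 0 (A - μj))) (q + h (max 0 (A - μ1))) ≤ h (max 0 (A - μj)) :=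
      min_le_left _ _
    have h2 := incr_aux h hconv hmono hh0 hμj hB0 hBA
    linarith
  · rw [min_eq_right hc]
    have h1 : min (h (max 0 (A - μj))) (q + h (max 0 (A - μ1))) ≤ q + h (max 0 (A - μ1)) :=
      min_le_right _ _
    have h2 := incr_aux h hconv hmono hh0 hμ1 hB0 hBA
    linarith
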